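/- arXiv:2410.08440 — 5 statements merged into one kernel-verified Lean document; each statement's English description precedes it below -/
import Mathlib

section
/- Let M be a real n×n matrix that is row diagonally dominant, i.e., |M_{ii}| ≥ Σ_{j≠i} |M_{ij}| for every index i. Let J = { i : |M_{ii}| > Σ_{j≠i} |M_{ij}| } be the set of strictly diagonally dominant rows. Suppose J is nonempty and that for every index i ∉ J there exists a finite sequence of indices i = i_1, i_2, …, i_s with M_{i_k i_{k+1}} ≠ 0 for all k = 1,…,s−1 and i_s ∈ J. Then M is nonsingular, i.e., det M ≠ 0. -/
/-- A row diagonally dominant real matrix whose set `J` of strictly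
diagonally dominant rows is nonempty, and such that every row outside `J` is connected
to `J` by a chain of nonzero entries, is nonsingular. -/
theorem row_dominant_chain_det_ne_zero {n : ℕ} (M : Matrix (Fin n) (Fin n) ℝ)
    (J : Set (Fin n))
    (hJdef : J = {i | ∑ j ∈ Finset.univ.erase i, |M i j| < |M i i|})
    (hdom : ∀ i, ∑ j ∈ Finset.univ.erase i, |M i j| ≤ |M i i|)
    (hJne : J.Nonempty)
    (hchain : ∀ i ∉ J, ∃ (s : ℕ) (c : Fin (s + 1) → Fin n),
      c 0 = i ∧ (∀ k : Fin s, M (c k.castSucc) (c k.succ) ≠ 0) ∧ c (Fin.last s) ∈ J) :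
    M.det ≠ 0 := by
  intro hdet
  obtain ⟨v, hv, hMv⟩ := (Matrix.exists_mulVec_eq_zero_iff).2 hdet
  obtain ⟨i₀, hi₀J⟩ := hJne
  have hne : (Finset.univ : Finset (Fin n)).Nonempty := ⟨i₀, Finset.mem_univ _⟩
  set m := Finset.univ.sup' hne (fun i => |v i|) with hm
  obtain ⟨imax, -, himax⟩ := Finset.exists_mem_eq_sup' hne (fun i => |v i|)
  have hle : ∀ j, |v j| ≤ m := fun j => hm ▸ Finset.le_sup' (fun i => |v i|) (Finset.mem_univ j)
  have hmpos : 0 < m := by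
    rcases Function.ne_iff.1 hv with ⟨j, hj⟩
    exact lt_of_lt_of_le (abs_pos.2 hj) (hle j)
  have key : ∀ i, |v i| = m →
      (∑ j ∈ Finset.univ.erase i, |M i j| = |M i i|) ∧
      ∀ j, M i j ≠ 0 → |v j| = m := by
    intro i hvi
    have h0 : ∑ j, M i j * v j = 0 := by
      have := congrFun hMv i
      simpa [Matrix.mulVec, dotProduct] using this
    have hsplit : M i i * v i = -∑ j ∈ Finset.univ.erase i, M i j * v j := by
      have h : M i i * v i + ∑ j ∈ Finset.univ.erase i, M i j * v j = 0 := by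
        rw [← h0]
        exact Finset.add_sum_erase Finset.univ (fun j => M i j * v j) (Finset.mem_univ i)
      linarith
    have h1 : |M i i| * m ≤ ∑ j ∈ Finset.univ.erase i, |M i j| * |v j| := by
      calc |M i i| * m = |M i i * v i| := by rw [abs_mul, hvi]
        _ = |∑ j ∈ Finset.univ.erase i, M i j * v j| := by rw [hsplit, abs_neg]
        _ ≤ ∑ j ∈ Finset.univ.erase i, |M i j * v j| := Finset.abs_sum_le_sum_abs _ _
        _ = ∑ j ∈ Finset.univ.erase i, |M i j| * |v j| := by simp [abs_mul]
    have h2 : ∑ j ∈ Finset.univ.erase i, |M i j| * |v j|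
        ≤ ∑ j ∈ Finset.univ.erase i, |M i j| * m :=
      Finset.sum_le_sum fun j _ => mul_le_mul_of_nonneg_left (hle j) (abs_nonneg _)
    have h3 : ∑ j ∈ Finset.univ.erase i, |M i j| * m ≤ |M i i| * m := by
      rw [← Finset.sum_mul]
      exact mul_le_mul_of_nonneg_right (hdom i) hmpos.le
    have heq1 : ∑ j ∈ Finset.univ.erase i, |M i j| * m = |M i i| * m := le_antisymm h3 (by linarith)
    have heq2 : ∑ j ∈ Finset.univ.erase i, |M i j| * |v j|
        = ∑ j ∈ Finset.univ.erase i, |M i j| * m := le_antisymm h2 (by linarith)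
    constructor
    · have : (∑ j ∈ Finset.univ.erase i, |M i j|) * m = |M i i| * m := by
        rw [Finset.sum_mul]; exact heq1
      exact mul_right_cancel₀ hmpos.ne' this
    · intro j hj
      by_cases hji : j = i
      · rw [hji]; exact hvi
      · have hterm : ∀ k ∈ Finset.univ.erase i, |M i k| * |v k| = |M i k| * m :=
          (Finset.sum_eq_sum_iff_of_le
            (fun k _ => mul_le_mul_of_nonneg_left (hle k) (abs_nonneg _))).1 heq2
        have := hterm j (Finset.mem_erase.2 ⟨hji, Finset.mem_univ _⟩)
        exact mul_left_cancel₀ (abs_ne_zero.2 hj) this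
  have himaxJ : imax ∉ J := by
    rw [hJdef]
    intro h
    have := (key imax himax.symm).1
    simp only [Set.mem_setOf_eq] at h
    linarith
  obtain ⟨s, c, hc0, hstep, hlast⟩ := hchain imax himaxJ
  have hall : ∀ k : Fin (s + 1), |v (c k)| = m := by
    intro k
    induction k using Fin.induction with
    | zero => rw [hc0]; exact himax.symm
    | succ k ih => exact (key _ ih).2 _ (hstep k)
  have hkey := (key _ (hall (Fin.last s))).1
  rw [hJdef] at hlast
  simp only [Set.mem_setOf_eq] at hlast
  linarith
end

section
/- In the graph setting, under the spanning-tree assumption, the matrix ν₁L + ν₂B is nonsingular (its determinant is nonzero). -/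
/-- In the graph setting, under the spanning-tree assumption, the
matrix `ν₁ L + ν₂ B` is nonsingular. -/
theorem pinned_laplacian_nonsingular {N : ℕ} (hN : 1 ≤ N)
    (A : Matrix (Fin N) (Fin N) ℝ)
    (hA : ∀ i j, 0 ≤ A i j) (hAdiag : ∀ i, A i i = 0)
    (b : Fin N → ℝ) (hb : ∀ i, 0 ≤ b i)
    (ν₁ ν₂ : ℝ) (hν₁ : 0 < ν₁) (hν₂ : 0 < ν₂)
    (d : Fin N → ℝ) (hd : ∀ i, d i = ∑ j, A i j)
    (L : Matrix (Fin N) (Fin N) ℝ) (hL : L = Matrix.diagonal d - A)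
    (hpin : ∃ i, 0 < b i)
    (hspan : ∀ i, b i = 0 → ∃ (s : ℕ) (c : Fin (s + 1) → Fin N),
      c 0 = i ∧ (∀ k : Fin s, A (c k.castSucc) (c k.succ) ≠ 0) ∧ 0 < b (c (Fin.last s))) :
    (ν₁ • L + ν₂ • Matrix.diagonal b).det ≠ 0 := by
  intro hdet
  obtain ⟨v, hv0, hMv⟩ := (Matrix.exists_mulVec_eq_zero_iff).mpr hdet
  haveI : NeZero N := ⟨by omega⟩
  have hne : (Finset.univ : Finset (Fin N)).Nonempty := Finset.univ_nonempty
  set m := Finset.univ.sup' hne (fun i => |v i|) with hm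
  have hle : ∀ i, |v i| ≤ m := fun i => Finset.le_sup' (fun i => |v i|) (Finset.mem_univ i)
  have hmpos : 0 < m := by
    obtain ⟨j, hj⟩ := Function.ne_iff.mp hv0
    exact lt_of_lt_of_le (abs_pos.mpr hj) (hle j)
  have hd0 : ∀ i, 0 ≤ d i := fun i => by
    rw [hd]; exact Finset.sum_nonneg fun j _ => hA i j
  have key : ∀ i, |v i| = m → b i = 0 ∧ ∀ j, A i j ≠ 0 → |v j| = m := by
    intro i hi
    have row : ν₁ * (d i * v i - ∑ j, A i j * v j) + ν₂ * (b i * v i) = 0 := by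
      have h := congrFun hMv i
      simp only [hL, Matrix.add_mulVec, Matrix.sub_mulVec, Matrix.smul_mulVec,
        Matrix.mulVec_diagonal, Pi.add_apply, Pi.smul_apply, Pi.sub_apply, Pi.zero_apply,
        smul_eq_mul] at h
      simpa [Matrix.mulVec, dotProduct] using h
    have h1 : (ν₁ * d i + ν₂ * b i) * v i = ν₁ * ∑ j, A i j * v j := by linarith [row]
    have habs : (ν₁ * d i + ν₂ * b i) * m = ν₁ * |∑ j, A i j * v j| := by
      have := congrArg abs h1
      rwa [abs_mul, abs_mul, abs_of_nonneg (add_nonneg (mul_nonneg hν₁.le (hd0 i)) (mul_nonneg hν₂.le (hb i))),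
        abs_of_nonneg hν₁.le, hi] at this
    have hS1 : |∑ j, A i j * v j| ≤ ∑ j, A i j * |v j| := by
      calc |∑ j, A i j * v j| ≤ ∑ j, |A i j * v j| := Finset.abs_sum_le_sum_abs _ _
        _ = ∑ j, A i j * |v j| := by
          exact Finset.sum_congr rfl fun j _ => by rw [abs_mul, abs_of_nonneg (hA i j)]
    have hS2 : ∑ j, A i j * |v j| ≤ d i * m := by
      rw [hd, Finset.sum_mul]
      exact Finset.sum_le_sum fun j _ => mul_le_mul_of_nonneg_left (hle j) (hA i j)
    have hchain : (ν₁ * d i + ν₂ * b i) * m ≤ ν₁ * (d i * m) := by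
      calc (ν₁ * d i + ν₂ * b i) * m = ν₁ * |∑ j, A i j * v j| := habs
        _ ≤ ν₁ * ∑ j, A i j * |v j| := by
            exact mul_le_mul_of_nonneg_left hS1 hν₁.le
        _ ≤ ν₁ * (d i * m) := mul_le_mul_of_nonneg_left hS2 hν₁.le
    have hbm : ν₂ * b i * m ≤ 0 := by nlinarith
    have hbi : b i = 0 := by
      have h0 : 0 ≤ ν₂ * b i * m := mul_nonneg (mul_nonneg hν₂.le (hb i)) hmpos.le
      have hle0 : b i ≤ 0 := by nlinarith [mul_pos hν₂ hmpos]
      exact le_antisymm hle0 (hb i)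
    refine ⟨hbi, ?_⟩
    -- equality in the sum
    have heq : ∑ j, A i j * |v j| = ∑ j, A i j * m := by
      have hge : d i * m ≤ ∑ j, A i j * |v j| := by
        have : ν₁ * (d i * m) ≤ ν₁ * ∑ j, A i j * |v j| := by
          calc ν₁ * (d i * m) = (ν₁ * d i + ν₂ * b i) * m := by rw [hbi]; ring
            _ = ν₁ * |∑ j, A i j * v j| := habs
            _ ≤ ν₁ * ∑ j, A i j * |v j| := mul_le_mul_of_nonneg_left hS1 hν₁.le
        exact le_of_mul_le_mul_left this hν₁
      have hsum : ∑ j, A i j * m = d i * m := by rw [hd, Finset.sum_mul]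
      have h' : ∑ j, A i j * |v j| = d i * m := le_antisymm hS2 hge
      rw [h', hsum]
    have hterm : ∀ j ∈ Finset.univ, A i j * |v j| = A i j * m :=
      (Finset.sum_eq_sum_iff_of_le
        (fun j _ => mul_le_mul_of_nonneg_left (hle j) (hA i j))).mp heq
    intro j hj
    have := hterm j (Finset.mem_univ j)
    exact mul_left_cancel₀ hj this
  -- pick a vertex attaining the max
  obtain ⟨i₀, -, hi₀⟩ := Finset.exists_mem_eq_sup' hne (fun i => |v i|)
  have hvi₀ : |v i₀| = m := hi₀.symm
  have hbi₀ : b i₀ = 0 := (key i₀ hvi₀).1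
  obtain ⟨s, c, hc0, hedge, hlast⟩ := hspan i₀ hbi₀
  have hall : ∀ k : Fin (s + 1), |v (c k)| = m := by
    intro k
    induction k using Fin.induction with
    | zero => rw [hc0]; exact hvi₀
    | succ k ih => exact (key _ ih).2 _ (hedge k)
  have : b (c (Fin.last s)) = 0 := (key _ (hall (Fin.last s))).1
  exact absurd this (ne_of_gt hlast)
end

section
/- In the graph setting, under the spanning-tree assumption, every entry of the inverse matrix (ν₁L + ν₂B)^{-1} is nonnegative, and the vector q := (ν₁L + ν₂B)^{-1} 1 (where 1 ∈ ℝ^N is the all-ones vector) has all entries strictly positive. -/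
open Finset

/-- Minimum principle: if the weak maximum-principle operator maps `x` to a
nonnegative vector, then `x` is nonnegative. -/
lemma min_principle {N : ℕ} (hN : 1 ≤ N)
    (A : Matrix (Fin N) (Fin N) ℝ) (hA : ∀ i j, 0 ≤ A i j)
    (b : Fin N → ℝ) (hb : ∀ i, 0 ≤ b i)
    (ν₁ ν₂ : ℝ) (hν₁ : 0 < ν₁) (hν₂ : 0 < ν₂)
    (hspan : ∀ i, b i = 0 → ∃ (s : ℕ) (c : Fin (s + 1) → Fin N),
      c 0 = i ∧ (∀ k : Fin s, A (c k.castSucc) (c k.succ) ≠ 0) ∧ 0 < b (c (Fin.last s)))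
    (x y : Fin N → ℝ) (hy : ∀ i, 0 ≤ y i)
    (heq : ∀ i, ν₁ * ((∑ j, A i j) * x i - ∑ j, A i j * x j) + ν₂ * (b i * x i) = y i) :
    ∀ i, 0 ≤ x i := by
  have hne : (Finset.univ : Finset (Fin N)).Nonempty := by
    simpa [Finset.univ_nonempty_iff] using Fin.pos_iff_nonempty.mp hN
  obtain ⟨i₀, -, hmin⟩ := Finset.exists_min_image Finset.univ x hne
  set m := x i₀ with hm
  have hmin' : ∀ j, m ≤ x j := fun j => hmin j (Finset.mem_univ j)
  -- it suffices to show 0 ≤ m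
  by_contra hcon
  push_neg at hcon
  obtain ⟨i₁, hi₁⟩ := hcon
  have hmneg : m < 0 := lt_of_le_of_lt (hmin' i₁) hi₁
  -- at any argmin with positive pinning we get a contradiction
  have hBpos : ∀ i, x i = m → 0 < b i → False := by
    intro i hxi hbi
    have h1 : (∑ j, A i j) * x i - ∑ j, A i j * x j ≤ 0 := by
      rw [Finset.sum_mul, sub_nonpos]
      exact Finset.sum_le_sum fun j _ => by
        rw [hxi]; exact mul_le_mul_of_nonneg_left (hmin' j) (hA i j)
    have h2 : ν₂ * (b i * x i) < 0 := by
      rw [hxi]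
      exact mul_neg_of_pos_of_neg hν₂ (mul_neg_of_pos_of_neg hbi hmneg)
    have := heq i
    nlinarith [hy i]
  -- at any argmin with zero pinning, neighbors are also argmins
  have hBzero : ∀ i, x i = m → b i = 0 → ∀ j, A i j ≠ 0 → x j = m := by
    intro i hxi hbi j hij
    have hle : ∀ k ∈ Finset.univ, A i k * m ≤ A i k * x k := fun k _ =>
      mul_le_mul_of_nonneg_left (hmin' k) (hA i k)
    have h1 : (∑ k, A i k * m) ≤ ∑ k, A i k * x k := Finset.sum_le_sum hle
    have heqi := heq i
    rw [hbi] at heqi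
    have h2 : ν₁ * ((∑ k, A i k) * x i - ∑ k, A i k * x k) = y i := by linarith [heqi]
    have h3 : (∑ k, A i k) * x i - ∑ k, A i k * x k ≤ 0 := by
      rw [hxi, Finset.sum_mul, sub_nonpos]; exact h1
    have h4 : (∑ k, A i k) * x i - ∑ k, A i k * x k = 0 := by
      nlinarith [hy i]
    have h5 : (∑ k, A i k * x k) = ∑ k, A i k * m := by
      rw [hxi, Finset.sum_mul] at h4; linarith
    have h6 := (Finset.sum_eq_sum_iff_of_le hle).mp h5.symm
    have h7 := h6 j (Finset.mem_univ j)
    have := mul_left_cancel₀ hij h7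
    linarith
  -- now derive the contradiction via the spanning path
  rcases lt_or_eq_of_le (hb i₀) with hbi | hbi
  · exact hBpos i₀ rfl hbi
  · obtain ⟨s, c, hc0, hcstep, hclast⟩ := hspan i₀ hbi.symm
    have hall : ∀ k : Fin (s + 1), x (c k) = m := by
      intro k
      induction k using Fin.induction with
      | zero => rw [hc0]
      | succ k ih =>
        rcases lt_or_eq_of_le (hb (c k.castSucc)) with hbk | hbk
        · exact absurd (hBpos _ ih hbk) (fun h => h)
        · exact hBzero _ ih hbk.symm _ (hcstep k)
    exact hBpos _ (hall (Fin.last s)) hclast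

/-- Strict minimum principle. -/
lemma min_principle_pos {N : ℕ} (hN : 1 ≤ N)
    (A : Matrix (Fin N) (Fin N) ℝ) (hA : ∀ i j, 0 ≤ A i j)
    (b : Fin N → ℝ) (hb : ∀ i, 0 ≤ b i)
    (ν₁ ν₂ : ℝ) (hν₁ : 0 < ν₁) (hν₂ : 0 < ν₂)
    (x y : Fin N → ℝ) (hy : ∀ i, 0 < y i)
    (heq : ∀ i, ν₁ * ((∑ j, A i j) * x i - ∑ j, A i j * x j) + ν₂ * (b i * x i) = y i) :
    ∀ i, 0 < x i := by
  have hne : (Finset.univ : Finset (Fin N)).Nonempty := by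
    simpa [Finset.univ_nonempty_iff] using Fin.pos_iff_nonempty.mp hN
  obtain ⟨i₀, -, hmin⟩ := Finset.exists_min_image Finset.univ x hne
  set m := x i₀ with hm
  have hmin' : ∀ j, m ≤ x j := fun j => hmin j (Finset.mem_univ j)
  have h1 : (∑ j, A i₀ j) * x i₀ - ∑ j, A i₀ j * x j ≤ 0 := by
    rw [Finset.sum_mul, sub_nonpos]
    exact Finset.sum_le_sum fun j _ => mul_le_mul_of_nonneg_left (hmin' j) (hA i₀ j)
  have heqi := heq i₀
  have hyi := hy i₀
  have hbm : 0 < ν₂ * (b i₀ * m) := by nlinarith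
  have hbpos : 0 < b i₀ := by
    rcases lt_or_eq_of_le (hb i₀) with h | h
    · exact h
    · rw [← h] at hbm; simp at hbm
  have hmpos : 0 < m := by
    by_contra h
    push_neg at h
    have h2 : b i₀ * m ≤ 0 := mul_nonpos_of_nonneg_of_nonpos (hb i₀) h
    nlinarith
  exact fun i => lt_of_lt_of_le hmpos (hmin' i)

/-- In the graph setting, under the spanning-tree assumption, the
inverse `(ν₁ L + ν₂ B)⁻¹` is entrywise nonnegative, and `q = (ν₁ L + ν₂ B)⁻¹ 𝟙` has all
entries strictly positive. -/
theorem pinned_laplacian_inverse_nonneg {N : ℕ} (hN : 1 ≤ N)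
    (A : Matrix (Fin N) (Fin N) ℝ)
    (hA : ∀ i j, 0 ≤ A i j) (hAdiag : ∀ i, A i i = 0)
    (b : Fin N → ℝ) (hb : ∀ i, 0 ≤ b i)
    (ν₁ ν₂ : ℝ) (hν₁ : 0 < ν₁) (hν₂ : 0 < ν₂)
    (d : Fin N → ℝ) (hd : ∀ i, d i = ∑ j, A i j)
    (L : Matrix (Fin N) (Fin N) ℝ) (hL : L = Matrix.diagonal d - A)
    (hpin : ∃ i, 0 < b i)
    (hspan : ∀ i, b i = 0 → ∃ (s : ℕ) (c : Fin (s + 1) → Fin N),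
      c 0 = i ∧ (∀ k : Fin s, A (c k.castSucc) (c k.succ) ≠ 0) ∧ 0 < b (c (Fin.last s)))
    (LB : Matrix (Fin N) (Fin N) ℝ)
    (hLB : LB = ν₁ • L + ν₂ • Matrix.diagonal b)
    (hinv : IsUnit LB.det) :
    (∀ i j, 0 ≤ LB⁻¹ i j) ∧ (∀ i, 0 < (Matrix.mulVec LB⁻¹ (fun _ => (1 : ℝ))) i) := by
  have hrow : ∀ (x : Fin N → ℝ) (i : Fin N),
      LB.mulVec x i = ν₁ * ((∑ j, A i j) * x i - ∑ j, A i j * x j) + ν₂ * (b i * x i) := by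
    intro x i
    rw [hLB, hL, Matrix.add_mulVec, Matrix.smul_mulVec, Matrix.smul_mulVec,
      Matrix.sub_mulVec]
    simp only [Pi.add_apply, Pi.smul_apply, Pi.sub_apply, smul_eq_mul,
      Matrix.mulVec, dotProduct, Matrix.diagonal_apply, ite_mul, zero_mul,
      Finset.sum_ite_eq, Finset.mem_univ, if_true, hd]
  have hII : LB * LB⁻¹ = 1 := Matrix.mul_nonsing_inv LB hinv
  constructor
  · intro i j
    have hcol : ∀ k, LB.mulVec (fun l => LB⁻¹ l j) k = (1 : Matrix (Fin N) (Fin N) ℝ) k j := by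
      intro k
      rw [← hII]
      simp [Matrix.mulVec, dotProduct, Matrix.mul_apply]
    have := min_principle hN A hA b hb ν₁ ν₂ hν₁ hν₂ hspan (fun l => LB⁻¹ l j)
      (fun k => (1 : Matrix (Fin N) (Fin N) ℝ) k j)
      (fun k => by simp [Matrix.one_apply]; split <;> norm_num)
      (fun k => by have h := hcol k; rw [hrow] at h; exact h)
    exact this i
  · set q := Matrix.mulVec LB⁻¹ (fun _ => (1 : ℝ)) with hq
    have hLq : LB.mulVec q = fun _ => (1 : ℝ) := by
      rw [hq, Matrix.mulVec_mulVec, hII, Matrix.one_mulVec]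
    have := min_principle_pos hN A hA b hb ν₁ ν₂ hν₁ hν₂ q (fun _ => (1 : ℝ))
      (fun k => one_pos)
      (fun k => by have h := congrFun hLq k; rw [hrow] at h; exact h)
    exact this
end

section
/- Let Δ be a real m×m matrix, β > 0, and P₁ a real symmetric m×m matrix satisfying Δᵀ P₁ + P₁ Δ = −β I. Let l ∈ ℝ^m, let r : ℝ → ℝ^N and E₁ : ℝ → ℝ^{N×m} be differentiable with Ė₁(t) = E₁(t) Δᵀ + r(t) lᵀ for all t, and define V₅(t) = ½ tr(E₁(t) P₁ E₁(t)ᵀ). Then for every t, the derivative of V₅ satisfies V̇₅(t) ≤ −(β/2) ‖E₁(t)‖_F² + σ̄(P₁) ‖l‖ ‖r(t)‖ ‖E₁(t)‖_F, where ‖·‖_F is the Frobenius norm, ‖·‖ the Euclidean norm, and σ̄(P₁) the largest singular value (operator norm) of P₁. -/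
open scoped Matrix

-- Equip matrices with the Frobenius norm (so that `‖E₁ t‖` below is `‖E₁ t‖_F`).
attribute [local instance] Matrix.frobeniusNormedAddCommGroup Matrix.frobeniusNormedSpace

/-- The maximum singular value `σ̄(P)` of a real matrix, i.e. its operator norm as a map
on Euclidean space. -/
noncomputable def sigmaMax {m : ℕ} (P : Matrix (Fin m) (Fin m) ℝ) : ℝ :=
  ‖LinearMap.toContinuousLinearMap (Matrix.toEuclideanLin P)‖

noncomputable def traceBL {N m : ℕ} (P : Matrix (Fin m) (Fin m) ℝ) :
    Matrix (Fin N) (Fin m) ℝ →ₗ[ℝ] Matrix (Fin N) (Fin m) ℝ →ₗ[ℝ] ℝ :=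
  LinearMap.mk₂ ℝ (fun X Y => (X * P * Yᵀ).trace)
    (fun X X' Y => by rw [Matrix.add_mul, Matrix.add_mul, Matrix.trace_add])
    (fun c X Y => by simp [Matrix.smul_mul, Matrix.trace_smul])
    (fun X Y Y' => by
      rw [Matrix.transpose_add, Matrix.mul_add, Matrix.trace_add])
    (fun c X Y => by simp [Matrix.transpose_smul, Matrix.mul_smul, Matrix.trace_smul])

noncomputable def traceB {N m : ℕ} (P : Matrix (Fin m) (Fin m) ℝ) :
    @ContinuousLinearMap ℝ ℝ _ _ (RingHom.id ℝ) (Matrix (Fin N) (Fin m) ℝ)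
      (Matrix.frobeniusNormedAddCommGroup).toUniformSpace.toTopologicalSpace _
      (@ContinuousLinearMap ℝ ℝ _ _ (RingHom.id ℝ) (Matrix (Fin N) (Fin m) ℝ)
        (Matrix.frobeniusNormedAddCommGroup).toUniformSpace.toTopologicalSpace _ ℝ _ _ _ _)
      _ _ _ _ :=
  LinearMap.toContinuousLinearMap
    { toFun := fun X => LinearMap.toContinuousLinearMap (traceBL P X)
      map_add' := by intro X Y; ext Z; simp
      map_smul' := by intro c X; ext Z; simp }

lemma transpose_sandwich {N m : ℕ} (A : Matrix (Fin N) (Fin m) ℝ)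
    (Q : Matrix (Fin m) (Fin m) ℝ) :
    (A * Q * Aᵀ).trace = (A * Qᵀ * Aᵀ).trace := by
  have h : (A * Q * Aᵀ)ᵀ = A * Qᵀ * Aᵀ := by
    rw [Matrix.transpose_mul, Matrix.transpose_mul, Matrix.transpose_transpose,
      Matrix.mul_assoc]
  rw [← h, Matrix.trace_transpose]

lemma frob_norm_eq {N m : ℕ} (A : Matrix (Fin N) (Fin m) ℝ) :
    ‖A‖ = Real.sqrt (∑ i, ∑ j, (A i j) ^ 2) := by
  rw [Matrix.frobenius_norm_def, Real.sqrt_eq_rpow]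
  congr 1
  refine Finset.sum_congr rfl fun i _ => Finset.sum_congr rfl fun j _ => ?_
  rw [show (2 : ℝ) = ((2 : ℕ) : ℝ) by norm_num, Real.rpow_natCast, Real.norm_eq_abs, sq_abs]

lemma trace_mul_transpose_self {N m : ℕ} (A : Matrix (Fin N) (Fin m) ℝ) :
    (A * Aᵀ).trace = ∑ i, ∑ j, (A i j) ^ 2 := by
  simp [Matrix.trace, Matrix.diag, Matrix.mul_apply, sq]

/-- If `Δᵀ P₁ + P₁ Δ = -β I` with `P₁` symmetric, and
`Ė₁ = E₁ Δᵀ + r lᵀ`, then `V₅ = ½ tr(E₁ P₁ E₁ᵀ)` satisfies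
`V̇₅ ≤ -(β/2) ‖E₁‖_F² + σ̄(P₁) ‖l‖ ‖r‖ ‖E₁‖_F`. -/
theorem lyapunov_V5_derivative_bound {m N : ℕ}
    (Δ : Matrix (Fin m) (Fin m) ℝ) (β : ℝ) (hβ : 0 < β)
    (P₁ : Matrix (Fin m) (Fin m) ℝ) (hP₁ : P₁.IsSymm)
    (hLyap : Δᵀ * P₁ + P₁ * Δ = -(β • (1 : Matrix (Fin m) (Fin m) ℝ)))
    (l : EuclideanSpace ℝ (Fin m))
    (r : ℝ → EuclideanSpace ℝ (Fin N)) (hr : Differentiable ℝ r)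
    (E₁ : ℝ → Matrix (Fin N) (Fin m) ℝ)
    (hE₁ : ∀ t : ℝ,
      HasDerivAt E₁ (E₁ t * Δᵀ + Matrix.vecMulVec (fun i => r t i) (fun k => l k)) t)
    (V₅ : ℝ → ℝ)
    (hV₅ : ∀ t : ℝ, V₅ t = (1 / 2) * Matrix.trace (E₁ t * P₁ * (E₁ t)ᵀ)) :
    ∀ t : ℝ, ∃ v : ℝ, HasDerivAt V₅ v t ∧
      v ≤ -(β / 2) * ‖E₁ t‖ ^ 2 + sigmaMax P₁ * ‖l‖ * ‖r t‖ * ‖E₁ t‖ := by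
  intro t
  set A : Matrix (Fin N) (Fin m) ℝ := E₁ t with hA
  set M : Matrix (Fin N) (Fin m) ℝ :=
    Matrix.vecMulVec (fun i => r t i) (fun k => l k) with hM
  set A' : Matrix (Fin N) (Fin m) ℝ := A * Δᵀ + M with hA'
  -- the derivative
  have hd : HasDerivAt V₅
      ((1 / 2) * (traceB P₁ A' A + traceB P₁ A A')) t := by
    have hVeq : V₅ = fun s => (1 / 2) * Matrix.trace (E₁ s * P₁ * (E₁ s)ᵀ) := funext hV₅
    rw [hVeq]
    have h1 : HasDerivAt (fun s => traceB P₁ (E₁ s)) (traceB (N := N) P₁ A') t :=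
      (traceB P₁).hasFDerivAt.comp_hasDerivAt t (hE₁ t)
    exact (h1.clm_apply (hE₁ t)).const_mul (1 / 2)
  refine ⟨_, hd, ?_⟩
  -- value of the derivative
  have hPsymm : P₁ᵀ = P₁ := hP₁
  have hswap : traceB (N := N) P₁ A A' = traceB P₁ A' A := by
    show (A * P₁ * A'ᵀ).trace = (A' * P₁ * Aᵀ).trace
    have h : (A * P₁ * A'ᵀ)ᵀ = A' * P₁ * Aᵀ := by
      rw [Matrix.transpose_mul, Matrix.transpose_mul, Matrix.transpose_transpose,
        Matrix.mul_assoc, hPsymm]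
    rw [← h, Matrix.trace_transpose]
  have hquad : (A * Δᵀ * P₁ * Aᵀ).trace = -(β / 2) * (A * Aᵀ).trace := by
    have e1 : A * Δᵀ * P₁ * Aᵀ = A * (Δᵀ * P₁) * Aᵀ := by rw [Matrix.mul_assoc A]
    have e2 : (A * (Δᵀ * P₁) * Aᵀ).trace + (A * (P₁ * Δ) * Aᵀ).trace
        = (A * (Δᵀ * P₁ + P₁ * Δ) * Aᵀ).trace := by
      rw [Matrix.mul_add, Matrix.add_mul, Matrix.trace_add]
    have e3 : (A * (P₁ * Δ) * Aᵀ).trace = (A * (Δᵀ * P₁) * Aᵀ).trace := by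
      rw [transpose_sandwich A (P₁ * Δ), Matrix.transpose_mul, hPsymm]
    have e4 : (A * (Δᵀ * P₁ + P₁ * Δ) * Aᵀ).trace = -β * (A * Aᵀ).trace := by
      rw [hLyap]
      have : A * -(β • (1 : Matrix (Fin m) (Fin m) ℝ)) * Aᵀ = -(β • (A * Aᵀ)) := by
        rw [Matrix.mul_neg, Matrix.neg_mul, Matrix.mul_smul, Matrix.mul_one,
          Matrix.smul_mul]
      rw [this, Matrix.trace_neg, Matrix.trace_smul, smul_eq_mul]
      ring
    rw [e1]
    nlinarith [e2, e3, e4]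
  -- cross term as a sum
  have hAA : (A * Aᵀ).trace = ‖A‖ ^ 2 := by
    rw [trace_mul_transpose_self, frob_norm_eq,
      Real.sq_sqrt (by positivity)]
  set w : Fin m → ℝ := fun k => ∑ j, l j * P₁ j k with hw
  have hterm : ∀ i k, (∑ j, (r t i * l j) * P₁ j k) = r t i * w k := by
    intro i k
    rw [hw, Finset.mul_sum]
    exact Finset.sum_congr rfl fun j _ => by ring
  have hcross : (M * P₁ * Aᵀ).trace = ∑ i, ∑ k, (r t i * w k) * A i k := by
    simp only [Matrix.trace, Matrix.diag, Matrix.mul_apply, Matrix.transpose_apply,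
      Matrix.vecMulVec_apply, hM]
    refine Finset.sum_congr rfl fun i _ => Finset.sum_congr rfl fun k _ => ?_
    congr 1
    exact hterm i k
  -- bound the cross term
  have hwPl : ∀ k, w k = P₁.mulVec (fun j => l j) k := by
    intro k
    rw [hw]
    simp only [Matrix.mulVec, dotProduct]
    refine Finset.sum_congr rfl fun j _ => ?_
    show l j * P₁ j k = P₁ k j * l j
    rw [mul_comm, hP₁.apply k j]
  have hwnorm : Real.sqrt (∑ k, (w k) ^ 2) ≤ sigmaMax P₁ * ‖l‖ := by
    have h1 : Real.sqrt (∑ k, (w k) ^ 2) = ‖Matrix.toEuclideanLin P₁ l‖ := by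
      rw [EuclideanSpace.norm_eq]
      congr 1
      refine Finset.sum_congr rfl fun k _ => ?_
      rw [Real.norm_eq_abs, sq_abs]
      congr 1
      rw [hwPl k]
      rfl
    rw [h1]
    calc ‖Matrix.toEuclideanLin P₁ l‖
        = ‖LinearMap.toContinuousLinearMap (Matrix.toEuclideanLin P₁) l‖ := rfl
      _ ≤ sigmaMax P₁ * ‖l‖ :=
          (LinearMap.toContinuousLinearMap (Matrix.toEuclideanLin P₁)).le_opNorm l
  have hCS : ∑ i, ∑ k, (r t i * w k) * A i k ≤ ‖r t‖ * Real.sqrt (∑ k, (w k) ^ 2) * ‖A‖ := by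
    have h1 : ∑ i, ∑ k, (r t i * w k) * A i k
        = ∑ p : Fin N × Fin m, (r t p.1 * w p.2) * A p.1 p.2 := by
      rw [Fintype.sum_prod_type]
    have h2 := Real.sum_mul_le_sqrt_mul_sqrt (Finset.univ : Finset (Fin N × Fin m))
      (fun p => r t p.1 * w p.2) (fun p => A p.1 p.2)
    have h3 : Real.sqrt (∑ p : Fin N × Fin m, (r t p.1 * w p.2) ^ 2)
        = ‖r t‖ * Real.sqrt (∑ k, (w k) ^ 2) := by
      have : ∑ p : Fin N × Fin m, (r t p.1 * w p.2) ^ 2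
          = (∑ i, (r t i) ^ 2) * (∑ k, (w k) ^ 2) := by
        rw [Fintype.sum_prod_type, Finset.sum_mul_sum]
        refine Finset.sum_congr rfl fun i _ => Finset.sum_congr rfl fun k _ => ?_
        ring
      rw [this, Real.sqrt_mul (by positivity)]
      congr 1
      rw [EuclideanSpace.norm_eq]
      congr 1
      refine Finset.sum_congr rfl fun i _ => ?_
      rw [Real.norm_eq_abs, sq_abs]
    have h4 : Real.sqrt (∑ p : Fin N × Fin m, (A p.1 p.2) ^ 2) = ‖A‖ := by
      rw [frob_norm_eq, Fintype.sum_prod_type]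
    rw [h1]
    calc ∑ p : Fin N × Fin m, (r t p.1 * w p.2) * A p.1 p.2
        ≤ Real.sqrt (∑ p : Fin N × Fin m, (r t p.1 * w p.2) ^ 2) *
          Real.sqrt (∑ p : Fin N × Fin m, (A p.1 p.2) ^ 2) := h2
      _ = ‖r t‖ * Real.sqrt (∑ k, (w k) ^ 2) * ‖A‖ := by rw [h3, h4]
  -- assemble
  have hval : (1 / 2) * (traceB (N := N) P₁ A' A + traceB P₁ A A')
      = -(β / 2) * ‖A‖ ^ 2 + (M * P₁ * Aᵀ).trace := by
    rw [hswap]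
    have : traceB (N := N) P₁ A' A = (A' * P₁ * Aᵀ).trace := rfl
    rw [this]
    have hexp : (A' * P₁ * Aᵀ).trace
        = (A * Δᵀ * P₁ * Aᵀ).trace + (M * P₁ * Aᵀ).trace := by
      rw [hA', Matrix.add_mul, Matrix.add_mul, Matrix.trace_add]
    rw [hexp, hquad, hAA]
    ring
  rw [hval]
  have hrest : (M * P₁ * Aᵀ).trace ≤ sigmaMax P₁ * ‖l‖ * ‖r t‖ * ‖A‖ := by
    rw [hcross]
    calc ∑ i, ∑ k, (r t i * w k) * A i k
        ≤ ‖r t‖ * Real.sqrt (∑ k, (w k) ^ 2) * ‖A‖ := hCS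
      _ ≤ ‖r t‖ * (sigmaMax P₁ * ‖l‖) * ‖A‖ := by
          have := mul_le_mul_of_nonneg_left hwnorm (norm_nonneg (r t))
          exact mul_le_mul_of_nonneg_right this (norm_nonneg A)
      _ = sigmaMax P₁ * ‖l‖ * ‖r t‖ * ‖A‖ := by ring
  linarith
end

section
/- Let β, κ, κ_w, κ₀, μ₁, g, γ₁, γ₂, γ₃ be real numbers and let K be the symmetric 5×5 arrowhead matrix with rows [β/2, 0, 0, 0, g], [0, κ, 0, 0, γ₁], [0, 0, κ_w, 0, γ₂], [0, 0, 0, κ₀, γ₃], [g, γ₁, γ₂, γ₃, μ₁]. Then K is positive definite if and only if β > 0, κ > 0, κ_w > 0, κ₀ > 0, and μ₁ > 2g²/β + γ₁²/κ + γ₂²/κ_w + γ₃²/κ₀. -/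
set_option maxHeartbeats 1000000 in
/-- The symmetric 5×5 arrowhead matrix `K` is positive definite iff
`β > 0`, `κ > 0`, `κ_w > 0`, `κ₀ > 0` and
`μ₁ > 2g²/β + γ₁²/κ + γ₂²/κ_w + γ₃²/κ₀`. -/
theorem arrowhead_posdef_iff (β κ κw κ₀ μ₁ g γ₁ γ₂ γ₃ : ℝ)
    (K : Matrix (Fin 5) (Fin 5) ℝ)
    (hK : K = !![β / 2, 0, 0, 0, g;
                 0, κ, 0, 0, γ₁;
                 0, 0, κw, 0, γ₂;
                 0, 0, 0, κ₀, γ₃;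
                 g, γ₁, γ₂, γ₃, μ₁]) :
    K.PosDef ↔ (0 < β ∧ 0 < κ ∧ 0 < κw ∧ 0 < κ₀ ∧
      2 * g ^ 2 / β + γ₁ ^ 2 / κ + γ₂ ^ 2 / κw + γ₃ ^ 2 / κ₀ < μ₁) := by
  subst hK
  have hQ : ∀ x : Fin 5 → ℝ,
      dotProduct (star x) ((!![β / 2, 0, 0, 0, g;
                 0, κ, 0, 0, γ₁;
                 0, 0, κw, 0, γ₂;
                 0, 0, 0, κ₀, γ₃;
                 g, γ₁, γ₂, γ₃, μ₁] : Matrix (Fin 5) (Fin 5) ℝ).mulVec x) =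
      β/2 * x 0^2 + κ * x 1^2 + κw * x 2^2 + κ₀ * x 3^2 + μ₁ * x 4^2
        + 2*g*x 0*x 4 + 2*γ₁*x 1*x 4 + 2*γ₂*x 2*x 4 + 2*γ₃*x 3*x 4 := by
    intro x
    simp [dotProduct, Matrix.mulVec, Fin.sum_univ_five]
    ring
  rw [Matrix.posDef_iff_dotProduct_mulVec]
  constructor
  · rintro ⟨-, hpos⟩
    have hpos := fun (x : Fin 5 → ℝ) (hx : x ≠ 0) => hpos hx
    have e0 := hpos ![1,0,0,0,0] (by intro h; simpa using congrFun h 0)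
    have e1 := hpos ![0,1,0,0,0] (by intro h; simpa using congrFun h 1)
    have e2 := hpos ![0,0,1,0,0] (by intro h; simpa using congrFun h 2)
    have e3 := hpos ![0,0,0,1,0] (by intro h; simpa using congrFun h 3)
    rw [hQ] at e0 e1 e2 e3
    simp at e0 e1 e2 e3
    have hβ : 0 < β := by linarith
    have hκ : 0 < κ := e1
    have hκw : 0 < κw := e2
    have hκ₀ : 0 < κ₀ := e3
    refine ⟨hβ, hκ, hκw, hκ₀, ?_⟩
    have e4 := hpos ![-2*g/β, -γ₁/κ, -γ₂/κw, -γ₃/κ₀, 1]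
      (by intro h; simpa using congrFun h 4)
    rw [hQ] at e4
    simp only [Matrix.cons_val_zero, Matrix.cons_val_one, Matrix.head_cons,
      Matrix.cons_val_fin_one] at e4
    have h4 : μ₁ - (2*g^2/β + γ₁^2/κ + γ₂^2/κw + γ₃^2/κ₀) > 0 := by
      have : β/2 * (-2*g/β)^2 + κ * (-γ₁/κ)^2 + κw * (-γ₂/κw)^2 + κ₀ * (-γ₃/κ₀)^2
          + μ₁ * 1^2 + 2*g*(-2*g/β)*1 + 2*γ₁*(-γ₁/κ)*1 + 2*γ₂*(-γ₂/κw)*1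
          + 2*γ₃*(-γ₃/κ₀)*1
          = μ₁ - (2*g^2/β + γ₁^2/κ + γ₂^2/κw + γ₃^2/κ₀) := by
        field_simp
        ring
      linarith [e4, this.symm ▸ e4]
    linarith
  · rintro ⟨hβ, hκ, hκw, hκ₀, hμ⟩
    refine ⟨?_, ?_⟩
    · ext i j
      fin_cases i <;> fin_cases j <;> simp [Matrix.conjTranspose_apply]
    · intro x hx
      rw [hQ]
      have key : β/2 * x 0^2 + κ * x 1^2 + κw * x 2^2 + κ₀ * x 3^2 + μ₁ * x 4^2
          + 2*g*x 0*x 4 + 2*γ₁*x 1*x 4 + 2*γ₂*x 2*x 4 + 2*γ₃*x 3*x 4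
          = β/2 * (x 0 + 2*g/β * x 4)^2 + κ * (x 1 + γ₁/κ * x 4)^2
            + κw * (x 2 + γ₂/κw * x 4)^2 + κ₀ * (x 3 + γ₃/κ₀ * x 4)^2
            + (μ₁ - (2*g^2/β + γ₁^2/κ + γ₂^2/κw + γ₃^2/κ₀)) * x 4^2 := by
        field_simp
        ring
      rw [key]
      clear hQ key
      have t0 : (0:ℝ) ≤ β/2 * (x 0 + 2*g/β * x 4)^2 := by positivity
      have t1 : (0:ℝ) ≤ κ * (x 1 + γ₁/κ * x 4)^2 := by positivity
      have t2 : (0:ℝ) ≤ κw * (x 2 + γ₂/κw * x 4)^2 := by positivity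
      have t3 : (0:ℝ) ≤ κ₀ * (x 3 + γ₃/κ₀ * x 4)^2 := by positivity
      have hd : 0 < μ₁ - (2*g^2/β + γ₁^2/κ + γ₂^2/κw + γ₃^2/κ₀) := by linarith
      have t4 : (0:ℝ) ≤ (μ₁ - (2*g^2/β + γ₁^2/κ + γ₂^2/κw + γ₃^2/κ₀)) * x 4^2 :=
        mul_nonneg hd.le (sq_nonneg _)
      by_cases h4 : x 4 = 0
      · have hne : x 0 ≠ 0 ∨ x 1 ≠ 0 ∨ x 2 ≠ 0 ∨ x 3 ≠ 0 := by
          by_contra h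
          push_neg at h
          obtain ⟨h0, h1, h2, h3⟩ := h
          exact hx (funext fun i => by
            fin_cases i <;> simp only [Pi.zero_apply] <;> assumption)
        rcases hne with h | h | h | h
        · have hz : x 0 + 2*g/β * x 4 ≠ 0 := by rw [h4]; simpa using h
          have := mul_pos (by linarith : (0:ℝ) < β/2) (pow_two_pos_of_ne_zero hz)
          linarith
        · have hz : x 1 + γ₁/κ * x 4 ≠ 0 := by rw [h4]; simpa using h
          have := mul_pos hκ (pow_two_pos_of_ne_zero hz)
          linarith
        · have hz : x 2 + γ₂/κw * x 4 ≠ 0 := by rw [h4]; simpa using h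
          have := mul_pos hκw (pow_two_pos_of_ne_zero hz)
          linarith
        · have hz : x 3 + γ₃/κ₀ * x 4 ≠ 0 := by rw [h4]; simpa using h
          have := mul_pos hκ₀ (pow_two_pos_of_ne_zero hz)
          linarith
      · have := mul_pos hd (pow_two_pos_of_ne_zero h4)
        linarith
end
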